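/- Let d ∈ ℂ, d ≠ 0. If a Laurent polynomial f ∈ ℂ[z, z⁻¹] satisfies f(1/(d·z)) = f(z) for all z ∈ ℂ∖{0}, then there exists a polynomial g ∈ ℂ[x] with f(z) = g((z⁻¹−1)(1−d·z)) for all z ∈ ℂ∖{0}; conversely, any f of this form is invariant. (Lemma 2.1, q-Racah case, written in the multiplicative variable z = q^x.) -/

import Mathlib

/-- Evaluation of a Laurent polynomial `f ∈ ℂ[z, z⁻¹]` at a point `z ∈ ℂ`
(intended for `z ≠ 0`), defined by `f(z) = ∑ₙ aₙ zⁿ` with integer powers. -/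
noncomputable def laurentEval (z : ℂ) (f : LaurentPolynomial ℂ) : ℂ :=
  f.coeff.sum fun n a => a * z ^ n

namespace QRacahAux

open LaurentPolynomial Polynomial

/-- Evaluation at a nonzero point, as an algebra hom. -/
noncomputable def E (z : ℂ) (hz : z ≠ 0) : LaurentPolynomial ℂ →ₐ[ℂ] ℂ :=
  AddMonoidAlgebra.lift ℂ ℂ ℤ ((Units.coeHom ℂ).comp (zpowersHom ℂˣ (Units.mk0 z hz)))

lemma E_single (z : ℂ) (hz : z ≠ 0) (n : ℤ) (a : ℂ) :
    E z hz (AddMonoidAlgebra.single n a) = a * z ^ n := by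
  rw [E, AddMonoidAlgebra.lift_single]
  simp [zpowersHom_apply, smul_eq_mul]

lemma E_apply (z : ℂ) (hz : z ≠ 0) (f : LaurentPolynomial ℂ) :
    E z hz f = laurentEval z f := by
  rw [E, AddMonoidAlgebra.lift_apply, laurentEval]
  refine Finsupp.sum_congr fun n _ => ?_
  simp [zpowersHom_apply, smul_eq_mul]

lemma E_T (z : ℂ) (hz : z ≠ 0) (n : ℤ) : E z hz (T n) = z ^ n := by
  simpa using E_single z hz n 1

lemma E_C (z : ℂ) (hz : z ≠ 0) (c : ℂ) : E z hz (C c) = c := by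
  rw [← single_eq_C]
  simpa using E_single z hz 0 c

lemma E_toLaurent (z : ℂ) (hz : z ≠ 0) (P : Polynomial ℂ) :
    E z hz (toLaurent P) = P.eval z := by
  have h : (E z hz).comp toLaurentAlg = Polynomial.aeval z := by
    apply Polynomial.algHom_ext
    simp [Polynomial.toLaurentAlg_apply, Polynomial.toLaurent_X, E_T]
  have := DFunLike.congr_fun h P
  simpa [Polynomial.toLaurentAlg_apply] using this

lemma eval_zero_imp (p : LaurentPolynomial ℂ)
    (h : ∀ z : ℂ, z ≠ 0 → laurentEval z p = 0) : p = 0 := by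
  obtain ⟨n, P, hP⟩ := p.exists_T_pow
  have hPz : ∀ z : ℂ, z ≠ 0 → P.eval z = 0 := by
    intro z hz
    have h2 := congrArg (E z hz) hP
    rw [E_toLaurent, map_mul, E_T, E_apply, h z hz, zero_mul] at h2
    exact h2
  have hP0 : P = 0 := by
    apply Polynomial.eq_zero_of_infinite_isRoot
    apply Set.Infinite.mono (s := {z : ℂ | z ≠ 0})
    · intro z hz; exact hPz z hz
    · have h0 : {z : ℂ | z ≠ 0} = ({0} : Set ℂ)ᶜ := by ext w; simp
      rw [h0]
      exact (Set.finite_singleton 0).infinite_compl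
  rw [hP0, map_zero] at hP
  have := (isUnit_T (R := ℂ) n).mul_left_eq_zero.mp hP.symm
  exact this

lemma eq_of_eval (p q : LaurentPolynomial ℂ)
    (h : ∀ z : ℂ, z ≠ 0 → laurentEval z p = laurentEval z q) : p = q := by
  have : p - q = 0 := by
    apply eval_zero_imp
    intro z hz
    rw [← E_apply z hz, map_sub, E_apply, E_apply, h z hz, sub_self]
  exact sub_eq_zero.mp this

/-- The involution on Laurent polynomials corresponding to `z ↦ 1/(d z)`. -/
noncomputable def sig (d : ℂ) (f : LaurentPolynomial ℂ) : LaurentPolynomial ℂ :=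
  f.coeff.sum fun n a => AddMonoidAlgebra.single (-n) (a * d ^ (-n))

lemma sig_coeff (d : ℂ) (f : LaurentPolynomial ℂ) (m : ℤ) :
    (sig d f).coeff m = f.coeff (-m) * d ^ m := by
  classical
  rw [sig, AddMonoidAlgebra.coeff_finsuppSum, Finsupp.sum_apply, Finsupp.sum, Finset.sum_eq_single (-m)]
  · simp only [neg_neg, AddMonoidAlgebra.coeff_single, Finsupp.single_eq_same]
  · intro n _ hn
    rw [AddMonoidAlgebra.coeff_single, Finsupp.single_apply, if_neg (by omega)]
  · intro h
    simp [Finsupp.notMem_support_iff.mp h]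

lemma eval_sig (d : ℂ) (f : LaurentPolynomial ℂ) (z : ℂ) (hz : z ≠ 0) :
    laurentEval z (sig d f) = laurentEval (1 / (d * z)) f := by
  rw [← E_apply z hz, sig, map_finsuppSum, laurentEval]
  refine Finsupp.sum_congr fun n _ => ?_
  rw [E_single]
  rw [one_div, inv_zpow, ← zpow_neg, mul_zpow]
  ring

lemma sig_eq_of_inv (d : ℂ) (f : LaurentPolynomial ℂ)
    (h : ∀ z : ℂ, z ≠ 0 → laurentEval (1 / (d * z)) f = laurentEval z f) :
    sig d f = f := by
  apply eq_of_eval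
  intro z hz
  rw [eval_sig d f z hz, h z hz]

/-- The polynomial `d X² + (−1−d) X + 1`. -/
noncomputable def Qp (d : ℂ) : Polynomial ℂ :=
  Polynomial.C d * X ^ 2 + Polynomial.C (-1 - d) * X + 1

/-- The q-Racah sinusoidal coordinate as a Laurent polynomial. -/
noncomputable def etaL (d : ℂ) : LaurentPolynomial ℂ := toLaurent (Qp d) * T (-1)

lemma E_etaL (d : ℂ) (z : ℂ) (hz : z ≠ 0) :
    E z hz (etaL d) = (z⁻¹ - 1) * (1 - d * z) := by
  rw [etaL, map_mul, E_toLaurent, E_T]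
  simp only [Qp, eval_add, eval_mul, eval_pow, eval_C, eval_X, eval_one]
  rw [show ((-1 : ℤ)) = -(1 : ℤ) from rfl, zpow_neg, zpow_one]
  field_simp
  ring

lemma toLaurent_coeff_nat (P : Polynomial ℂ) (n : ℕ) :
    (toLaurent P).coeff (n : ℤ) = P.coeff n := by
  rw [LaurentPolynomial.coeff_toLaurent]
  exact (Finsupp.mapDomain_apply Nat.castEmbedding.injective _ n).trans rfl

lemma toLaurent_coeff_neg (P : Polynomial ℂ) (m : ℤ) (hm : m < 0) :
    (toLaurent P).coeff m = 0 := by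
  rw [LaurentPolynomial.coeff_toLaurent]
  apply Finsupp.mapDomain_notin_range
  rintro ⟨n, rfl⟩
  have : (0 : ℤ) ≤ Nat.castEmbedding n := Int.natCast_nonneg n
  omega

lemma coeff_mul_T (f : LaurentPolynomial ℂ) (k m : ℤ) :
    ((f * T k : LaurentPolynomial ℂ)).coeff m = f.coeff (m - k) := by
  have h := AddMonoidAlgebra.coeff_mul_single_apply f (1 : ℂ) k m
  rw [mul_one] at h
  exact h

lemma etaL_pow (d : ℂ) (K : ℕ) :
    etaL d ^ K = toLaurent (Qp d ^ K) * T (-(K : ℤ)) := by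
  rw [etaL, mul_pow, ← map_pow, T_pow, show ((K : ℤ) * (-1)) = -(K : ℤ) by ring]

lemma natDegree_Qp (d : ℂ) (hd : d ≠ 0) : (Qp d).natDegree = 2 := by
  unfold Qp
  compute_degree!

lemma leadingCoeff_Qp (d : ℂ) (hd : d ≠ 0) : (Qp d).leadingCoeff = d := by
  rw [Polynomial.leadingCoeff, natDegree_Qp d hd]
  simp [Qp, Polynomial.coeff_one]

lemma coeff_etaL_pow_top (d : ℂ) (hd : d ≠ 0) (K : ℕ) :
    (etaL d ^ K).coeff ((K : ℕ) : ℤ) = d ^ K := by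
  rw [etaL_pow, coeff_mul_T, sub_neg_eq_add,
    show ((K : ℤ) + (K : ℤ)) = ((K * (Qp d).natDegree : ℕ) : ℤ) by
      rw [natDegree_Qp d hd]; push_cast; ring,
    toLaurent_coeff_nat, Polynomial.coeff_pow_mul_natDegree, leadingCoeff_Qp d hd]

lemma coeff_etaL_pow_big (d : ℂ) (hd : d ≠ 0) (K : ℕ) (m : ℤ)
    (hm : (K : ℤ) < m ∨ m < -(K : ℤ)) : (etaL d ^ K).coeff m = 0 := by
  rw [etaL_pow, coeff_mul_T, sub_neg_eq_add]
  rcases hm with hm | hm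
  · have h0 : (0 : ℤ) ≤ m + K := by omega
    rw [show (m + (K : ℤ)) = (((m + K).toNat : ℕ) : ℤ) by omega, toLaurent_coeff_nat]
    apply Polynomial.coeff_eq_zero_of_natDegree_lt
    calc (Qp d ^ K).natDegree ≤ K * (Qp d).natDegree := Polynomial.natDegree_pow_le
    _ = 2 * K := by rw [natDegree_Qp d hd]; ring
    _ < (m + K).toNat := by omega
  · exact toLaurent_coeff_neg _ _ (by omega)

lemma inv_CmulEta (d : ℂ) (hd : d ≠ 0) (c : ℂ) (K : ℕ) (f : LaurentPolynomial ℂ)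
    (hf : sig d f = f) :
    sig d (f - LaurentPolynomial.C c * etaL d ^ K) = f - LaurentPolynomial.C c * etaL d ^ K := by
  apply eq_of_eval
  intro z hz
  have hz2 : (1 : ℂ) / (d * z) ≠ 0 := one_div_ne_zero (mul_ne_zero hd hz)
  rw [eval_sig d _ z hz, ← E_apply _ hz2, ← E_apply z hz]
  simp only [map_sub, map_mul, map_pow, E_C, E_etaL]
  have hf2 : E (1 / (d * z)) hz2 f = E z hz f := by
    rw [E_apply, E_apply, ← eval_sig d f z hz, hf]
  rw [hf2]
  have heta : ((1 / (d * z))⁻¹ - 1) * (1 - d * (1 / (d * z))) = (z⁻¹ - 1) * (1 - d * z) := by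
    field_simp
    ring
  rw [heta]

lemma key (d : ℂ) (hd : d ≠ 0) (N : ℕ) :
    ∀ f : LaurentPolynomial ℂ, sig d f = f →
      (∀ m ∈ f.coeff.support, m.natAbs ≤ N) →
      ∃ g : Polynomial ℂ, f = Polynomial.aeval (etaL d) g := by
  induction N with
  | zero =>
    intro f hsig hsupp
    refine ⟨Polynomial.C (f.coeff 0), ?_⟩
    rw [Polynomial.aeval_C, ← LaurentPolynomial.C_eq_algebraMap]
    ext m
    by_cases hm : m = 0
    · subst hm; simp
    · have : f.coeff m = 0 := by
        by_contra h
        have := hsupp m (Finsupp.mem_support_iff.mpr h)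
        omega
      simp [this, hm]
  | succ N IH =>
    intro f hsig hsupp
    set K := N + 1 with hK
    set c := f.coeff (K : ℤ) * (d ^ K)⁻¹ with hc
    set f' := f - LaurentPolynomial.C c * etaL d ^ K with hf'
    have hsig' : sig d f' = f' := inv_CmulEta d hd c K f hsig
    have hCmul : ∀ m : ℤ, ((LaurentPolynomial.C c * etaL d ^ K : LaurentPolynomial ℂ)).coeff m = c * (etaL d ^ K).coeff m := by
      intro m
      rw [← single_eq_C]
      exact AddMonoidAlgebra.coeff_single_zero_mul _ c m
    have htop : f'.coeff ((K : ℕ) : ℤ) = 0 := by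
      rw [hf', AddMonoidAlgebra.coeff_sub, Finsupp.sub_apply, hCmul, coeff_etaL_pow_top d hd K, hc]
      field_simp
      ring
    have hbot : f'.coeff (-(K : ℕ) : ℤ) = 0 := by
      have := sig_coeff d f' ((K : ℕ) : ℤ)
      rw [hsig', htop] at this
      have hdK : d ^ ((K : ℕ) : ℤ) ≠ 0 := zpow_ne_zero _ hd
      rcases mul_eq_zero.mp this.symm with h | h
      · exact h
      · exact absurd h hdK
    have hsupp' : ∀ m ∈ f'.coeff.support, m.natAbs ≤ N := by
      intro m hm
      have hm0 : f'.coeff m ≠ 0 := Finsupp.mem_support_iff.mp hm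
      by_contra hcon
      push_neg at hcon
      have hKm : (K : ℤ) ≤ m.natAbs := by omega
      rcases eq_or_ne m (K : ℤ) with rfl | h1
      · exact hm0 htop
      rcases eq_or_ne m (-(K : ℤ)) with rfl | h2
      · exact hm0 hbot
      have hbig : (K : ℤ) < m ∨ m < -(K : ℤ) := by omega
      have hfm : f.coeff m = 0 := by
        by_contra h
        have := hsupp m (Finsupp.mem_support_iff.mpr h)
        omega
      apply hm0
      rw [hf', AddMonoidAlgebra.coeff_sub, Finsupp.sub_apply, hCmul, coeff_etaL_pow_big d hd K m hbig, hfm]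
      ring
    obtain ⟨g', hg'⟩ := IH f' hsig' hsupp'
    refine ⟨g' + Polynomial.C c * X ^ K, ?_⟩
    rw [map_add, ← hg', map_mul, Polynomial.aeval_C, ← LaurentPolynomial.C_eq_algebraMap, map_pow,
      Polynomial.aeval_X, hf']
    ring

end QRacahAux

open QRacahAux LaurentPolynomial Polynomial in
/-- Lemma 2.1 (q-Racah case, multiplicative variable `z = q^x`): a Laurent polynomial
`f` is invariant under the involution `z ↦ 1/(d z)` iff it is a polynomial in the
q-Racah sinusoidal coordinate `η_d(z) = (z⁻¹ - 1)(1 - d z)`. -/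
theorem qracah_involution_invariant_iff_poly_in_eta (d : ℂ) (hd : d ≠ 0)
    (f : LaurentPolynomial ℂ) :
    (∀ z : ℂ, z ≠ 0 → laurentEval (1 / (d * z)) f = laurentEval z f) ↔
      ∃ g : Polynomial ℂ, ∀ z : ℂ, z ≠ 0 →
        laurentEval z f = g.eval ((z⁻¹ - 1) * (1 - d * z)) := by
  constructor
  · intro h
    have hsig : sig d f = f := sig_eq_of_inv d f h
    obtain ⟨g, hg⟩ := key d hd (f.coeff.support.sup Int.natAbs) f hsig
      (fun m hm => Finset.le_sup (f := Int.natAbs) hm)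
    refine ⟨g, fun z hz => ?_⟩
    rw [← E_apply z hz, hg, ← Polynomial.aeval_algHom_apply, E_etaL]
    simp [Polynomial.coe_aeval_eq_eval]
  · rintro ⟨g, hg⟩ z hz
    have hz2 : (1 : ℂ) / (d * z) ≠ 0 := one_div_ne_zero (mul_ne_zero hd hz)
    rw [hg z hz, hg _ hz2]
    congr 1
    field_simp
    ring
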